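/- Let a, b, c ∈ [0, π] with a + b + c = S and sin a + sin b + sin c = T, where 0 < T and a ≤ b ≤ c. If (a, b, c) maximizes sin(a/2) + sin(b/2) + sin(c/2) subject to these constraints, then a = 0 or b = c. -/

import Mathlib

open Real

lemma sin_slope {x y : ℝ} (hx : 0 ≤ x) (hxy : x ≤ y) (hy : y ≤ π) :
    (y - x) * Real.cos y ≤ Real.sin y - Real.sin x ∧
      Real.sin y - Real.sin x ≤ (y - x) * Real.cos x := by
  rcases eq_or_lt_of_le hxy with rfl | hlt
  · simp
  · obtain ⟨ξ, hξ, hslope⟩ := exists_hasDerivAt_eq_slope Real.sin Real.cos hlt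
      (Real.continuous_sin.continuousOn) (fun t _ => Real.hasDerivAt_sin t)
    have hne : y - x ≠ 0 := by linarith
    have h1 : Real.sin y - Real.sin x = (y - x) * Real.cos ξ := by
      rw [hslope]; field_simp
    have hcl : Real.cos y ≤ Real.cos ξ :=
      Real.cos_le_cos_of_nonneg_of_le_pi (le_trans hx hξ.1.le) hy hξ.2.le
    have hcu : Real.cos ξ ≤ Real.cos x :=
      Real.cos_le_cos_of_nonneg_of_le_pi hx (hξ.2.le.trans hy) hξ.1.le
    constructor
    · rw [h1]; nlinarith
    · rw [h1]; nlinarith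

lemma cos_lip (x y : ℝ) : |Real.cos x - Real.cos y| ≤ |x - y| := by
  rw [Real.cos_sub_cos]
  calc |-2 * Real.sin ((x + y)/2) * Real.sin ((x - y)/2)|
      = 2 * |Real.sin ((x+y)/2)| * |Real.sin ((x-y)/2)| := by
        rw [abs_mul, abs_mul]; simp [abs_of_nonneg]
    _ ≤ 2 * 1 * |(x-y)/2| := by
        have h1 := Real.abs_sin_le_abs (x := (x-y)/2)
        have h2 := Real.abs_sin_le_one ((x+y)/2)
        have h3 := abs_nonneg (Real.sin ((x-y)/2))
        nlinarith [abs_nonneg ((x-y)/2), abs_nonneg (Real.sin ((x+y)/2))]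
    _ = |x - y| := by rw [abs_div]; simp [abs_of_pos]; ring

lemma sin_lip (x y : ℝ) : |Real.sin x - Real.sin y| ≤ |x - y| := by
  rw [Real.sin_sub_sin]
  calc |2 * Real.sin ((x - y)/2) * Real.cos ((x + y)/2)|
      = 2 * |Real.sin ((x-y)/2)| * |Real.cos ((x+y)/2)| := by
        rw [abs_mul, abs_mul]; simp
    _ ≤ 2 * |(x-y)/2| * 1 := by
        have h1 := Real.abs_sin_le_abs (x := (x-y)/2)
        have h2 := Real.abs_cos_le_one ((x+y)/2)
        have h3 := abs_nonneg (Real.sin ((x-y)/2))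
        nlinarith [abs_nonneg ((x-y)/2)]
    _ = |x - y| := by rw [abs_div]; simp [abs_of_pos]; ring

lemma exists_pos_le10 {c1 c2 c3 c4 c5 c6 c7 c8 c9 c10 : ℝ}
    (h1:0<c1)(h2:0<c2)(h3:0<c3)(h4:0<c4)(h5:0<c5)(h6:0<c6)(h7:0<c7)(h8:0<c8)(h9:0<c9)(h10:0<c10) :
    ∃ s, 0<s ∧ s≤c1 ∧ s≤c2 ∧ s≤c3 ∧ s≤c4 ∧ s≤c5 ∧ s≤c6 ∧ s≤c7 ∧ s≤c8 ∧ s≤c9 ∧ s≤c10 := by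
  refine ⟨min c1 (min c2 (min c3 (min c4 (min c5 (min c6 (min c7 (min c8 (min c9 c10)))))))),
    ?_, ?_, ?_, ?_, ?_, ?_, ?_, ?_, ?_, ?_, ?_⟩ <;>
    simp only [lt_min_iff, min_le_iff, le_refl, true_or, or_true, and_true] <;> tauto

lemma sin_add_sin (x y : ℝ) :
    Real.sin x + Real.sin y = 2 * Real.sin ((x+y)/2) * Real.cos ((x-y)/2) := by
  have h1 := Real.sin_add ((x+y)/2) ((x-y)/2)
  have h2 := Real.sin_sub ((x+y)/2) ((x-y)/2)
  rw [show (x+y)/2 + (x-y)/2 = x by ring] at h1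
  rw [show (x+y)/2 - (x-y)/2 = y by ring] at h2
  rw [h1, h2]; ring

lemma algB_tlow {t w : ℝ} (ht0 : 0 ≤ t) (hsq : t^2 = 1 - w/2) (hw0 : 0 ≤ w) (hw1 : w ≤ 1) :
    1 - w/4 - w^2/8 ≤ t := by
  have hw2 : w^2 ≤ w := by
    have h0 := mul_le_mul_of_nonneg_left hw1 hw0
    linarith [h0]
  by_contra hcon
  push_neg at hcon
  have h1 : 0 < ((1 - w/4 - w^2/8) - t) * ((1 - w/4 - w^2/8) + t) :=
    mul_pos (by linarith) (by linarith)
  have h2 : 0 ≤ w^2*(12 - 4*w - w^2) := mul_nonneg (sq_nonneg w) (by linarith)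
  linarith [h1, h2, hsq]

lemma algB_final {p q h s w C₁ E : ℝ}
    (hp_pos : 0 < p) (hp1 : p ≤ 1) (hq0 : 0 ≤ q) (hqp : q < p)
    (hh_pos : 0 < h) (hh1 : h ≤ 1) (hs0 : 0 < s) (hs7 : s ≤ h)
    (hw0 : 0 ≤ w) (hw1 : w ≤ 1) (hwC : w ≤ C₁ * s) (hC₁_pos : 0 < C₁)
    (hE : E = 3/2 + (3/4) * C₁ + C₁^2 / 4)
    (hT3 : 2*p*h*w ≤ s*(p-q)*(3*p+q))
    (hs9 : s ≤ (p-q)^2/(8*p*E)) :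
    0 < 2*(h + s*p/2 - s^2/4)*(1 - w/4 - w^2/8) - 2*h - s*q - s^2 := by
  have hE_pos : 0 < E := by rw [hE]; positivity
  have step1 : 2*(h + s*p/2 - s^2/4)*(1 - w/4 - w^2/8) - 2*h ≥
      s*p - s^2/2 - (h*w/2 + h*w^2/4 + s*w/2 + s*w^2/4) := by
    have h1 : 0 ≤ w/2 + w^2/4 := by positivity
    have h2 : 0 ≤ s - s*p/2 + s^2/4 := by
      have h3 := mul_le_mul_of_nonneg_left hp1 hs0.le
      linarith [h3, sq_nonneg s]
    linarith [mul_nonneg h1 h2]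
  have step2 : h*w/2 ≤ s*(p-q)*(3*p+q)/(4*p) := by
    rw [le_div_iff₀ (by positivity : (0:ℝ) < 4*p)]
    linarith [hT3]
  have step3 : h*w^2/4 + s*w/2 + s*w^2/4 + (3/2)*s^2 ≤ s^2*E := by
    have hww1 : w^2 ≤ C₁*s*w := by
      have h0 := mul_le_mul_of_nonneg_right hwC hw0
      linarith [h0]
    have hww2 : w^2 ≤ C₁*s := by
      have h0 := mul_le_mul_of_nonneg_left hw1 (by positivity : (0:ℝ) ≤ C₁*s)
      linarith [h0, hww1]
    have hww3 : w^2 ≤ (C₁*s)^2 := by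
      have h0 := mul_le_mul hwC hwC hw0 (by positivity : (0:ℝ) ≤ C₁*s)
      linarith [h0]
    have e1 : h*w^2/4 ≤ (C₁*s)^2/4 := by
      have h0 := mul_nonneg (by linarith : (0:ℝ) ≤ 1-h) (sq_nonneg w)
      linarith [h0, hww3]
    have e2 : s*w/2 ≤ C₁*s^2/2 := by
      have h0 := mul_le_mul_of_nonneg_left hwC hs0.le
      linarith [h0]
    have e3 : s*w^2/4 ≤ C₁*s^2/4 := by
      have h0 := mul_le_mul_of_nonneg_left hww2 hs0.le
      linarith [h0]
    have e4 : s^2*E = (3/2)*s^2 + (3/4)*C₁*s^2 + (C₁*s)^2/4 := by rw [hE]; ring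
    linarith [e1, e2, e3]
  have hs9' : s*(8*p*E) ≤ (p-q)^2 := by
    rw [le_div_iff₀ (by positivity : (0:ℝ) < 8*p*E)] at hs9
    linarith [hs9]
  have hs9'' : s*(s*(8*p*E)) ≤ s*(p-q)^2 := by
    have h0 := mul_le_mul_of_nonneg_left hs9' hs0.le
    linarith [h0]
  have hq2 : 0 < s*(p-q)^2 := mul_pos hs0 (pow_pos (by linarith) 2)
  have hstep3p : (4*p)*(h*w^2/4 + s*w/2 + s*w^2/4 + (3/2)*s^2) ≤ (4*p)*(s^2*E) :=
    mul_le_mul_of_nonneg_left step3 (by positivity)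
  have hT : 0 < (4*p)*(s*p - s^2/2 - (h*w/2 + h*w^2/4 + s*w/2 + s*w^2/4) - s*q - s^2) := by
    nlinarith [hT3, hstep3p, hs9'', hq2]
  have hTpos : 0 < s*p - s^2/2 - (h*w/2 + h*w^2/4 + s*w/2 + s*w^2/4) - s*q - s^2 := by
    by_contra hcon
    push_neg at hcon
    have h0 : (4*p)*(s*p - s^2/2 - (h*w/2 + h*w^2/4 + s*w/2 + s*w^2/4) - s*q - s^2) ≤ 0 :=
      mul_nonpos_iff.2 (Or.inl ⟨by positivity, hcon⟩)
    linarith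
  linarith [step1, hTpos]

set_option maxHeartbeats 1000000 in
lemma improveB {x c : ℝ} (hx0 : 0 < x) (hxc : x < c) (hc : c ≤ π) :
    ∃ a' b' c', a' ∈ Set.Icc 0 π ∧ b' ∈ Set.Icc 0 π ∧ c' ∈ Set.Icc 0 π ∧
      a' + b' + c' = x + x + c ∧
      Real.sin a' + Real.sin b' + Real.sin c' = Real.sin x + Real.sin x + Real.sin c ∧
      Real.sin (x/2) + Real.sin (x/2) + Real.sin (c/2) <
        Real.sin (a'/2) + Real.sin (b'/2) + Real.sin (c'/2) := by
  have hpi := Real.pi_pos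
  have hxpi : x < π := lt_of_lt_of_le hxc hc
  obtain ⟨p, hp⟩ : ∃ p, p = Real.cos (x/2) := ⟨_, rfl⟩
  obtain ⟨q, hq⟩ : ∃ q, q = Real.cos (c/2) := ⟨_, rfl⟩
  obtain ⟨h, hh⟩ : ∃ h, h = Real.sin (x/2) := ⟨_, rfl⟩
  have hp_pos : 0 < p := hp ▸ Real.cos_pos_of_mem_Ioo ⟨by linarith, by linarith⟩
  have hq0 : 0 ≤ q := hq ▸ Real.cos_nonneg_of_mem_Icc ⟨by linarith, by linarith⟩
  have hqp : q < p := by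
    rw [hp, hq]
    exact Real.strictAntiOn_cos ⟨by linarith, by linarith⟩ ⟨by linarith, by linarith⟩
      (by linarith)
  have hh_pos : 0 < h := hh ▸ Real.sin_pos_of_pos_of_lt_pi (by linarith) (by linarith)
  have hh1 : h ≤ 1 := hh ▸ Real.sin_le_one _
  have hp1 : p ≤ 1 := hp ▸ Real.cos_le_one _
  have hsinx : Real.sin x = 2 * h * p := by
    rw [hh, hp, show x = 2 * (x/2) by ring, Real.sin_two_mul]; ring_nf
  have hcosx : Real.cos x = 2 * p^2 - 1 := by
    rw [hp, show x = 2 * (x/2) by ring, Real.cos_two_mul]; ring_nf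
  have hcosc : Real.cos c = 2 * q^2 - 1 := by
    rw [hq, show c = 2 * (c/2) by ring, Real.cos_two_mul]; ring_nf
  have hsinx_pos : 0 < Real.sin x := by rw [hsinx]; positivity
  obtain ⟨C₁, hC₁⟩ : ∃ C₁, C₁ = 4 * (p^2 - q^2) / Real.sin x := ⟨_, rfl⟩
  have hpq2 : 0 < p^2 - q^2 := by
    have h2 : p^2 - q^2 = (p-q)*(p+q) := by ring
    rw [h2]
    exact mul_pos (by linarith) (by linarith)
  have hC₁_pos : 0 < C₁ := by rw [hC₁]; positivity
  obtain ⟨E, hE⟩ : ∃ E, E = 3/2 + (3/4) * C₁ + C₁^2 / 4 := ⟨_, rfl⟩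
  have hE_pos : 0 < E := by rw [hE]; positivity
  -- pick s
  obtain ⟨s, hs0, hs1, hs2, hs3, hs4, hs5, hs6, hs7, hs8, hs9, hs10⟩ :=
    exists_pos_le10 (c1 := (c - x)/4) (c2 := Real.sin x / 4) (c3 := (π - x)/2)
      (c4 := 2*x^2/(π^2*C₁)) (c5 := (π - x)^2/(2*π^2*C₁)) (c6 := c/2) (c7 := h)
      (c8 := 2*h*p*(p-q)/(3*p+q)) (c9 := (p-q)^2/(8*p*E)) (c10 := (p-q)^2/C₁)
      (by linarith) (by linarith) (by linarith) (by positivity)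
      (by
        have h1 : 0 < π - x := by linarith
        positivity)
      (by linarith) hh_pos
      (by
        have h1 : 0 < p - q := by linarith
        positivity)
      (by
        have h1 : 0 < p - q := by linarith
        positivity)
      (by
        have h1 : 0 < p - q := by linarith
        positivity)
  -- slope facts
  have hyπ : x + s ≤ π := by linarith
  obtain ⟨A1l, A1u⟩ := sin_slope (x := x) (y := x + s) hx0.le (by linarith) hyπ
  rw [add_sub_cancel_left] at A1l A1u
  obtain ⟨A3l, A3u⟩ := sin_slope (x := c - 2*s) (y := c) (by linarith) (by linarith) hc
  rw [show c - (c - 2*s) = 2*s by ring] at A3l A3u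
  obtain ⟨N, hN⟩ : ∃ N, N = 2*Real.sin (x+s) + Real.sin (c-2*s) - 2*Real.sin x - Real.sin c :=
    ⟨_, rfl⟩
  have hcos_gap : Real.cos (c - 2*s) < Real.cos (x + s) := by
    apply Real.strictAntiOn_cos ⟨by linarith, hyπ⟩ ⟨by linarith, by linarith⟩
    linarith
  have hN_pos : 0 < N := by
    have h1 : 2*s*(Real.cos (x+s) - Real.cos (c-2*s)) ≤ N := by rw [hN]; linarith
    have h2 : 0 < 2*s*(Real.cos (x+s) - Real.cos (c-2*s)) :=
      mul_pos (by linarith) (by linarith)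
    linarith
  have hNup : N ≤ 4*s*(p^2 - q^2) := by
    have h1 : N ≤ 2*s*(Real.cos x - Real.cos c) := by rw [hN]; linarith
    have h2 : 2*s*(Real.cos x - Real.cos c) = 4*s*(p^2 - q^2) := by
      rw [hcosx, hcosc]; ring
    linarith
  have hsy_low : Real.sin x - s ≤ Real.sin (x+s) := by
    have h1 := mul_le_mul_of_nonneg_left (Real.neg_one_le_cos (x+s)) hs0.le
    linarith
  have hsy_pos : 0 < Real.sin (x+s) := by linarith
  obtain ⟨w, hw⟩ : ∃ w, w = N / (2 * Real.sin (x+s)) := ⟨_, rfl⟩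
  have hw_pos : 0 < w := by rw [hw]; positivity
  have hw_eq : w * (2 * Real.sin (x+s)) = N := by rw [hw]; field_simp
  have hkey : w * Real.sin x ≤ 4*s*(p^2 - q^2) := by
    have h1 : Real.sin x ≤ 2 * Real.sin (x+s) := by linarith
    have h2 : w * Real.sin x ≤ w * (2*Real.sin (x+s)) := mul_le_mul_of_nonneg_left h1 hw_pos.le
    rw [hw_eq] at h2
    linarith
  have hwC : w ≤ C₁ * s := by
    have h2 : w ≤ 4*(p^2-q^2)*s/Real.sin x := (le_div_iff₀ hsinx_pos).mpr (by linarith [hkey])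
    have h3 : C₁ * s = 4*(p^2-q^2)*s/Real.sin x := by rw [hC₁]; ring
    rw [h3]
    exact h2
  have hpq_le1 : p^2 - q^2 ≤ 1 := by
    have h2 := mul_le_mul hp1 hp1 hp_pos.le zero_le_one
    have h3 := sq_nonneg q
    linarith [h2, h3]
  have hw1 : w ≤ 1 := by
    have h1 : 4*s*(p^2 - q^2) ≤ 4*s := by
      have h0 := mul_le_mul_of_nonneg_left hpq_le1 (by linarith : (0:ℝ) ≤ 4*s)
      linarith
    have h2 : w * Real.sin x ≤ 1 * Real.sin x := by linarith
    exact le_of_mul_le_mul_right h2 hsinx_pos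
  have hw_pq : w ≤ (p - q)^2 := by
    have h1 : C₁ * s ≤ (p-q)^2 := by
      rw [le_div_iff₀ hC₁_pos] at hs10
      linarith [hs10]
    linarith
  -- define u
  obtain ⟨u, hu⟩ : ∃ u, u = Real.arccos (1 - w) := ⟨_, rfl⟩
  have hu0 : 0 ≤ u := hu ▸ Real.arccos_nonneg _
  have huπ : u ≤ π := hu ▸ Real.arccos_le_pi _
  have hcosu : Real.cos u = 1 - w := by
    rw [hu]; exact Real.cos_arccos (by linarith) (by linarith)
  have hsinuh : u/π ≤ Real.sin (u/2) := by
    have h1 := Real.mul_le_sin (x := u/2) (by linarith) (by linarith)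
    calc u/π = 2/π * (u/2) := by ring
    _ ≤ Real.sin (u/2) := h1
  have hw_sin : w = 2 * Real.sin (u/2)^2 := by
    have h1 : Real.cos u = 1 - 2*Real.sin (u/2)^2 := by
      have h0 := Real.cos_two_mul' (u/2)
      rw [show 2*(u/2) = u by ring] at h0
      have h2 := Real.sin_sq_add_cos_sq (u/2)
      linarith [h0, h2]
    rw [hcosu] at h1
    linarith
  have hu_sq : u^2 ≤ π^2 * w / 2 := by
    have h0 : 0 ≤ u/π := by positivity
    have h1 : (u/π)^2 ≤ Real.sin (u/2)^2 := pow_le_pow_left₀ h0 hsinuh 2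
    have h2 : (u/π)^2 = u^2/π^2 := by rw [div_pow]
    have h3 : u^2/π^2 ≤ w/2 := by linarith [h1, h2, hw_sin]
    have h4 := (div_le_iff₀ (by positivity : (0:ℝ) < π^2)).1 h3
    linarith
  have hwCs : π^2 * w / 2 ≤ π^2 * (C₁ * s) / 2 := by
    have h0 := mul_le_mul_of_nonneg_left hwC (by positivity : (0:ℝ) ≤ π^2/2)
    linarith [h0]
  have hu_le_x : u ≤ x := by
    by_contra hcon
    push_neg at hcon
    have h1 : x^2 < u^2 := by
      have := pow_lt_pow_left₀ hcon hx0.le (n := 2) (by norm_num)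
      linarith [this]
    have h2 : s * (π^2*C₁) ≤ 2*x^2 := (le_div_iff₀ (by positivity)).1 hs4
    linarith [hu_sq, hwCs, h1, h2]
  have hu_le_2 : u ≤ (π - x)/2 := by
    by_contra hcon
    push_neg at hcon
    have h0 : 0 < (π - x)/2 := by linarith
    have h1 : ((π-x)/2)^2 < u^2 := by
      have := pow_lt_pow_left₀ hcon h0.le (n := 2) (by norm_num)
      linarith [this]
    have h2 : s * (2*π^2*C₁) ≤ (π-x)^2 := (le_div_iff₀ (by positivity)).1 hs5
    linarith [hu_sq, hwCs, h1, h2]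
  -- the new triple
  refine ⟨x + s - u, x + s + u, c - 2*s, ⟨by linarith, by linarith⟩,
    ⟨by linarith, by linarith⟩, ⟨by linarith, by linarith⟩, by ring, ?_, ?_⟩
  · -- sine sum constraint
    have hpair : Real.sin (x+s-u) + Real.sin (x+s+u) = 2*Real.sin (x+s) * Real.cos u := by
      rw [_root_.sin_add_sin, show ((x+s-u)+(x+s+u))/2 = x+s by ring,
        show ((x+s-u)-(x+s+u))/2 = -u by ring, Real.cos_neg]
    have h1 : 2*Real.sin (x+s) * Real.cos u = 2*Real.sin (x+s) - N := by
      rw [hcosu]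
      have h2 : 2*Real.sin (x+s) * (1-w) = 2*Real.sin (x+s) - w*(2*Real.sin (x+s)) := by
        ring
      rw [h2, hw_eq]
    rw [hpair, h1, hN]
    ring
  · -- objective increases
    have hpair2 : Real.sin ((x+s-u)/2) + Real.sin ((x+s+u)/2) =
        2*Real.sin ((x+s)/2) * Real.cos (u/2) := by
      rw [_root_.sin_add_sin, show ((x+s-u)/2+(x+s+u)/2)/2 = (x+s)/2 by ring,
        show ((x+s-u)/2-(x+s+u)/2)/2 = -(u/2) by ring, Real.cos_neg]
    obtain ⟨t, ht⟩ : ∃ t, t = Real.cos (u/2) := ⟨_, rfl⟩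
    have ht0 : 0 ≤ t := ht ▸ Real.cos_nonneg_of_mem_Icc ⟨by linarith, by linarith⟩
    have ht_sq : t^2 = 1 - w/2 := by
      have h1 := Real.cos_two_mul (u/2)
      rw [show 2*(u/2) = u by ring, hcosu, ← ht] at h1
      linarith [h1]
    have ht_low : 1 - w/4 - w^2/8 ≤ t := algB_tlow ht0 ht_sq hw_pos.le hw1
    obtain ⟨B1l, _⟩ := sin_slope (x := x/2) (y := (x+s)/2) (by linarith) (by linarith)
      (by linarith)
    rw [show (x+s)/2 - x/2 = s/2 by ring] at B1l
    have hclip : p - s/2 ≤ Real.cos ((x+s)/2) := by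
      have h1 := cos_lip ((x+s)/2) (x/2)
      rw [← hp] at h1
      have h2 : |(x+s)/2 - x/2| = s/2 := by
        rw [show (x+s)/2 - x/2 = s/2 by ring]
        exact abs_of_pos (by linarith)
      rw [h2] at h1
      have h3 := abs_le.1 h1
      linarith [h3.1]
    have hB1 : h + s*p/2 - s^2/4 ≤ Real.sin ((x+s)/2) := by
      have h1 : (s/2)*(p - s/2) ≤ (s/2)*Real.cos ((x+s)/2) :=
        mul_le_mul_of_nonneg_left hclip (by linarith)
      rw [hh]
      linarith [B1l, h1]
    have hA0 : 0 ≤ h + s*p/2 - s^2/4 := by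
      have h1 : s*s ≤ h*1 := mul_le_mul hs7 (hs7.trans hh1) hs0.le hh_pos.le
      have h2 : 0 ≤ s*p := mul_nonneg hs0.le hp_pos.le
      linarith [h1, h2]
    have hw2w : w^2 ≤ w := by
      have h0 := mul_le_mul_of_nonneg_left hw1 hw_pos.le
      linarith [h0]
    have hr0 : 0 ≤ 1 - w/4 - w^2/8 := by linarith
    have hsin_nn : 0 ≤ Real.sin ((x+s)/2) := le_trans hA0 hB1
    have hpair_low : 2*(h + s*p/2 - s^2/4)*(1 - w/4 - w^2/8) ≤
        2*Real.sin ((x+s)/2) * t := by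
      have h1 := mul_le_mul hB1 ht_low hr0 hsin_nn
      linarith [h1]
    obtain ⟨_, T2u⟩ := sin_slope (x := (c-2*s)/2) (y := c/2) (by linarith) (by linarith)
      (by linarith)
    rw [show c/2 - (c-2*s)/2 = s by ring] at T2u
    have hclip2 : Real.cos ((c-2*s)/2) ≤ q + s := by
      have h1 := cos_lip ((c-2*s)/2) (c/2)
      rw [← hq] at h1
      have h2 : |(c-2*s)/2 - c/2| = s := by
        rw [show (c-2*s)/2 - c/2 = -s by ring, abs_neg]
        exact abs_of_pos hs0
      rw [h2] at h1
      have h3 := abs_le.1 h1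
      linarith [h3.2]
    have hT2 : -(s*q) - s^2 ≤ Real.sin ((c-2*s)/2) - Real.sin (c/2) := by
      have h1 : s * Real.cos ((c-2*s)/2) ≤ s*(q+s) :=
        mul_le_mul_of_nonneg_left hclip2 hs0.le
      linarith [T2u, h1]
    have hT3 : 2*p*h*w ≤ s*(p-q)*(3*p+q) := by
      have h1 : w*(2*Real.sin (x+s)) ≤ 4*s*(p^2-q^2) := by rw [hw_eq]; exact hNup
      have h2 : 2*(2*h*p) - 2*s ≤ 2*Real.sin (x+s) := by rw [← hsinx]; linarith
      have h3 : w*(4*h*p - 2*s) ≤ w*(2*Real.sin (x+s)) :=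
        mul_le_mul_of_nonneg_left (by linarith) hw_pos.le
      have h5 : 2*s*w ≤ 2*s*(p-q)^2 := by
        have h0 := mul_le_mul_of_nonneg_left hw_pq (by linarith : (0:ℝ) ≤ 2*s)
        linarith [h0]
      linarith [h1, h3, h5]
    have hfinal := algB_final hp_pos hp1 hq0 hqp hh_pos hh1 hs0 hs7 hw_pos.le hw1 hwC
      hC₁_pos hE hT3 hs9
    rw [hpair2, ← hh, ← ht]
    linarith [hpair_low, hT2, hfinal]

lemma algA_final {α β γ r s K Q : ℝ}
    (hγ0 : 0 ≤ γ) (hγβ : γ < β) (hβα : β < α) (hα1 : α ≤ 1)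
    (hs0 : 0 < s) (hr0 : 0 ≤ r) (hK0 : 0 ≤ K) (hrK : r ≤ K*s)
    (hlow : s*(α^2-β^2) ≤ r*(β^2-γ^2))
    (hQ : Q = (1+(1+K)^2+K^2)/4)
    (hs7 : s ≤ (α-β)*(α-γ)/(8*Q)) :
    0 < -(s/2)*α - s^2/4 + ((s+r)/2)*β - (s+r)^2/4 - (r/2)*γ - r^2/4 := by
  have hQ_pos : 0 < Q := by rw [hQ]; positivity
  have hβ0 : 0 < β := by linarith
  have hP : 0 < (α-β)*(α-γ) := mul_pos (by linarith) (by linarith)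
  have hsP : 0 < s*((α-β)*(α-γ)) := mul_pos hs0 hP
  have h2 : s*((α-β)*(α-γ)) ≤ (s*(β-α)+r*(β-γ))*(β+γ) := by linarith [hlow]
  have hX : 0 < s*(β-α)+r*(β-γ) := by
    by_contra hcon
    push_neg at hcon
    have h1 : (s*(β-α)+r*(β-γ))*(β+γ) ≤ 0 :=
      mul_nonpos_iff.2 (Or.inr ⟨hcon, by linarith⟩)
    linarith
  have h4 : (s*(β-α)+r*(β-γ))*(β+γ) ≤ (s*(β-α)+r*(β-γ))*2 := by
    have h0 := mul_le_mul_of_nonneg_left (show β+γ ≤ 2 by linarith) hX.le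
    linarith [h0]
  have hr2 : r*r ≤ (K*s)*(K*s) := mul_le_mul hrK hrK hr0 (by positivity)
  have hsr : s + r ≤ (1+K)*s := by linarith [hrK]
  have hsr2 : (s+r)*(s+r) ≤ ((1+K)*s)*((1+K)*s) :=
    mul_le_mul hsr hsr (by linarith) (by positivity)
  have hs8Q : s*(8*Q) ≤ (α-β)*(α-γ) := by
    rw [le_div_iff₀ (by positivity)] at hs7
    linarith [hs7]
  have hs8Q' : s*(s*(8*Q)) ≤ s*((α-β)*(α-γ)) := mul_le_mul_of_nonneg_left hs8Q hs0.le
  have hQs : s^2*Q = (2+2*K+2*K^2)/4*s^2 := by rw [hQ]; ring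
  linarith [h2, h4, hr2, hsr2, hs8Q', hQs, hsP]

set_option maxHeartbeats 1000000 in
lemma improveA {a b c : ℝ} (ha0 : 0 < a) (hab : a < b) (hbc : b < c) (hc : c ≤ π) :
    ∃ a' b' c', a' ∈ Set.Icc 0 π ∧ b' ∈ Set.Icc 0 π ∧ c' ∈ Set.Icc 0 π ∧
      a' + b' + c' = a + b + c ∧
      Real.sin a' + Real.sin b' + Real.sin c' = Real.sin a + Real.sin b + Real.sin c ∧
      Real.sin (a/2) + Real.sin (b/2) + Real.sin (c/2) <
        Real.sin (a'/2) + Real.sin (b'/2) + Real.sin (c'/2) := by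
  have hpi := Real.pi_pos
  have hbpi : b < π := lt_of_lt_of_le hbc hc
  have hapi : a < π := lt_trans hab hbpi
  obtain ⟨α, hα⟩ : ∃ α, α = Real.cos (a/2) := ⟨_, rfl⟩
  obtain ⟨β, hβ⟩ : ∃ β, β = Real.cos (b/2) := ⟨_, rfl⟩
  obtain ⟨γ, hγ⟩ : ∃ γ, γ = Real.cos (c/2) := ⟨_, rfl⟩
  have hγ0 : 0 ≤ γ := hγ ▸ Real.cos_nonneg_of_mem_Icc ⟨by linarith, by linarith⟩
  have hγβ : γ < β := by
    rw [hβ, hγ]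
    exact Real.strictAntiOn_cos ⟨by linarith, by linarith⟩ ⟨by linarith, by linarith⟩
      (by linarith)
  have hβα : β < α := by
    rw [hα, hβ]
    exact Real.strictAntiOn_cos ⟨by linarith, by linarith⟩ ⟨by linarith, by linarith⟩
      (by linarith)
  have hα1 : α ≤ 1 := hα ▸ Real.cos_le_one _
  have hcosa : Real.cos a = 2*α^2 - 1 := by
    rw [hα, show a = 2 * (a/2) by ring, Real.cos_two_mul]; ring_nf
  have hcosb : Real.cos b = 2*β^2 - 1 := by
    rw [hβ, show b = 2 * (b/2) by ring, Real.cos_two_mul]; ring_nf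
  have hcosc : Real.cos c = 2*γ^2 - 1 := by
    rw [hγ, show c = 2 * (c/2) by ring, Real.cos_two_mul]; ring_nf
  obtain ⟨m₀, hm₀⟩ : ∃ m, m = (b+c)/2 := ⟨_, rfl⟩
  obtain ⟨D', hD'⟩ : ∃ d, d = (c-b)/2 := ⟨_, rfl⟩
  have hm₀_mem : 0 < m₀ ∧ m₀ < π := by constructor <;> [rw [hm₀]; rw [hm₀]] <;> linarith
  have hsinm₀ : 0 < Real.sin m₀ := Real.sin_pos_of_pos_of_lt_pi hm₀_mem.1 hm₀_mem.2
  have hD'_mem : 0 < D' ∧ D' ≤ π/2 := by constructor <;> [rw [hD']; rw [hD']] <;> linarith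
  obtain ⟨σ, hσ⟩ : ∃ σ, σ = Real.sin (D'/2) := ⟨_, rfl⟩
  have hσ_pos : 0 < σ :=
    hσ ▸ Real.sin_pos_of_pos_of_lt_pi (by linarith [hD'_mem.1]) (by linarith [hD'_mem.2])
  have hcosD'0 : 0 ≤ Real.cos D' :=
    Real.cos_nonneg_of_mem_Icc ⟨by linarith [hD'_mem.1], hD'_mem.2⟩
  have hcosD'1 : Real.cos D' < 1 := by
    have h0 : Real.cos D' < Real.cos 0 :=
      Real.strictAntiOn_cos ⟨le_refl 0, by linarith⟩ ⟨by linarith [hD'_mem.1], by linarith [hD'_mem.2]⟩ hD'_mem.1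
    simpa using h0
  obtain ⟨K, hK⟩ : ∃ K, K = π/(σ*Real.sin m₀) := ⟨_, rfl⟩
  have hK_pos : 0 < K := by rw [hK]; positivity
  obtain ⟨Q, hQ⟩ : ∃ Q, Q = (1+(1+K)^2+K^2)/4 := ⟨_, rfl⟩
  have hQ_pos : 0 < Q := by rw [hQ]; positivity
  have hP_pos : 0 < (α-β)*(α-γ) := mul_pos (by linarith) (by linarith)
  -- pick s
  obtain ⟨s, hs0, hs1, hs2, hs3, hs4, hs5, hs6, hs7, hs8, -, -⟩ :=
    exists_pos_le10 (c1 := a) (c2 := π - b) (c3 := (c-b)/2) (c4 := 2*π - b - c)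
      (c5 := Real.sin m₀*(1-Real.cos D')/2) (c6 := Real.sin m₀)
      (c7 := (α-β)*(α-γ)/(8*Q)) (c8 := 1) (c9 := 1) (c10 := 1)
      ha0 (by linarith) (by linarith) (by linarith)
      (by
        have h0 : 0 < 1 - Real.cos D' := by linarith
        positivity)
      hsinm₀ (by positivity) one_pos one_pos one_pos
  obtain ⟨M, hM⟩ : ∃ M, M = (b+c+s)/2 := ⟨_, rfl⟩
  obtain ⟨D, hD⟩ : ∃ D, D = (c-b-s)/2 := ⟨_, rfl⟩
  have hD_pos : 0 < D := by rw [hD]; linarith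
  have hD_lt : D ≤ π/2 := by rw [hD]; linarith
  have hM_mem : 0 < M ∧ M ≤ π := by constructor <;> [rw [hM]; rw [hM]] <;> linarith
  -- sin M close to sin m₀
  have hsinM_low : Real.sin m₀ - s/2 ≤ Real.sin M := by
    have h0 := sin_lip m₀ M
    have h1 : |m₀ - M| = s/2 := by
      rw [hm₀, hM, show (b+c)/2 - (b+c+s)/2 = -(s/2) by ring, abs_neg]
      exact abs_of_pos (by linarith)
    rw [h1] at h0
    have h2 := abs_le.1 h0
    linarith [h2.2]
  have hsinM_up : Real.sin M ≤ Real.sin m₀ + s/2 := by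
    have h0 := sin_lip M m₀
    have h1 : |M - m₀| = s/2 := by
      rw [hm₀, hM, show (b+c+s)/2 - (b+c)/2 = s/2 by ring]
      exact abs_of_pos (by linarith)
    rw [h1] at h0
    have h2 := abs_le.1 h0
    linarith [h2.1]
  have hsinM_pos : 0 < Real.sin M := by linarith
  have hsinM_half : Real.sin m₀/2 ≤ Real.sin M := by linarith
  -- key product identities
  have idBC : Real.sin b + Real.sin c = 2*Real.sin m₀*Real.cos D' := by
    rw [_root_.sin_add_sin b c, show (b+c)/2 = m₀ by rw [hm₀],
      show (b-c)/2 = -D' by rw [hD']; ring, Real.cos_neg]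
  have idBsC : Real.sin (b+s) + Real.sin c = 2*Real.sin M*Real.cos D := by
    rw [_root_.sin_add_sin (b+s) c, show ((b+s)+c)/2 = M by rw [hM]; ring,
      show ((b+s)-c)/2 = -D by rw [hD]; ring, Real.cos_neg]
  -- slopes for a
  obtain ⟨Sa_l, Sa_u⟩ := sin_slope (x := a - s) (y := a) (by linarith) (by linarith)
    (by linarith)
  rw [show a - (a-s) = s by ring] at Sa_l Sa_u
  have hsina_up : Real.sin a - Real.sin (a-s) ≤ s := by
    have h0 : s*Real.cos (a-s) ≤ s*1 :=
      mul_le_mul_of_nonneg_left (Real.cos_le_one _) hs0.le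
    linarith
  -- rho
  obtain ⟨ρ, hρ⟩ : ∃ ρ, ρ = (Real.sin a + Real.sin b + Real.sin c - Real.sin (a-s)) /
    (2*Real.sin M) := ⟨_, rfl⟩
  have hρ_eq : ρ * (2*Real.sin M) = Real.sin a + Real.sin b + Real.sin c - Real.sin (a-s) := by
    rw [hρ]; field_simp
  have hρ_le1 : ρ ≤ 1 := by
    rw [hρ, div_le_one (by linarith)]
    linarith [idBC, hsina_up, hsinM_low, hs5]
  -- strict: cos D < rho
  have hcosD_lt : Real.cos D < ρ := by
    obtain ⟨Sb_l, Sb_u⟩ := sin_slope (x := b) (y := b + s) (by linarith) (by linarith)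
      (by linarith)
    rw [add_sub_cancel_left] at Sb_l Sb_u
    have hcab : Real.cos b < Real.cos a :=
      Real.strictAntiOn_cos ⟨ha0.le, by linarith⟩ ⟨by linarith, by linarith⟩ hab
    have h0 : s*Real.cos b < s*Real.cos a := by
      exact mul_lt_mul_of_pos_left hcab hs0
    have h1 : Real.sin (b+s) - Real.sin b < Real.sin a - Real.sin (a-s) := by linarith
    rw [hρ, lt_div_iff₀ (by linarith)]
    have h2 : Real.cos D * (2*Real.sin M) = Real.sin (b+s) + Real.sin c := by
      rw [idBsC]; ring
    linarith [h2, h1]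
  have hcosD_pos : 0 < Real.cos D := Real.cos_pos_of_mem_Ioo ⟨by linarith, by linarith⟩
  have hρ_lb : -1 ≤ ρ := by linarith
  -- r
  obtain ⟨r, hr⟩ : ∃ r, r = D - Real.arccos ρ := ⟨_, rfl⟩
  have hDr : D - r = Real.arccos ρ := by rw [hr]; ring
  have hcosDr : Real.cos (D - r) = ρ := by rw [hDr]; exact Real.cos_arccos hρ_lb hρ_le1
  have hr_le : r ≤ D := by
    rw [hr]
    have := Real.arccos_nonneg ρ
    linarith
  have hr_pos : 0 < r := by
    by_contra hcon
    push_neg at hcon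
    have h0 : D ≤ Real.arccos ρ := by rw [hr] at hcon; linarith
    have h1 : Real.cos (Real.arccos ρ) ≤ Real.cos D :=
      Real.cos_le_cos_of_nonneg_of_le_pi hD_pos.le (Real.arccos_le_pi ρ) h0
    rw [Real.cos_arccos hρ_lb hρ_le1] at h1
    linarith
  -- constraint
  have idBC2 : Real.sin (b+s+r) + Real.sin (c-r) = 2*Real.sin M*Real.cos (D-r) := by
    rw [_root_.sin_add_sin (b+s+r) (c-r), show ((b+s+r)+(c-r))/2 = M by rw [hM]; ring,
      show ((b+s+r)-(c-r))/2 = -(D-r) by rw [hD]; ring, Real.cos_neg]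
  have hconstraint : Real.sin (a-s) + Real.sin (b+s+r) + Real.sin (c-r) =
      Real.sin a + Real.sin b + Real.sin c := by
    have h0 : Real.sin (b+s+r) + Real.sin (c-r) =
        Real.sin a + Real.sin b + Real.sin c - Real.sin (a-s) := by
      rw [idBC2, hcosDr]
      linarith [hρ_eq]
    linarith
  -- range facts
  have hbsr_le : b + s + r ≤ M := by
    rw [hM]; rw [hD] at hr_le; linarith
  have hcr_ge : M ≤ c - r := by
    rw [hM]; rw [hD] at hr_le; linarith
  -- lower bound for r
  have hr_low : s*(Real.cos a - Real.cos b) ≤ r*(Real.cos b - Real.cos c) := by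
    obtain ⟨Sb2_l, Sb2_u⟩ := sin_slope (x := b) (y := b+s+r) (by linarith) (by linarith)
      (by linarith [hM_mem.2])
    rw [show b+s+r - b = s + r by ring] at Sb2_l Sb2_u
    obtain ⟨Sc_l, Sc_u⟩ := sin_slope (x := c-r) (y := c) (by linarith [hM_mem.1])
      (by linarith) hc
    rw [show c - (c-r) = r by ring] at Sc_l Sc_u
    linarith [hconstraint, Sa_l, Sb2_u, Sc_l]
  -- upper bound for r
  have hr_up : r ≤ K*s := by
    -- 2 sinM (cos(D-r) - cos D') <= 2 s
    have g1 : 2*Real.sin M*(Real.cos (D-r) - Real.cos D') ≤ 2*s := by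
      have e1 : 2*Real.sin M*Real.cos (D-r) =
          Real.sin a + Real.sin b + Real.sin c - Real.sin (a-s) := by
        rw [hcosDr]; linarith [hρ_eq]
      have p2 : 2*(Real.sin m₀ - Real.sin M)*Real.cos D' ≤ s := by
        rcases le_or_gt (Real.sin m₀ - Real.sin M) 0 with hneg | hpos
        · have h0 : (Real.sin m₀ - Real.sin M)*Real.cos D' ≤ 0 :=
            mul_nonpos_iff.2 (Or.inr ⟨hneg, hcosD'0⟩)
          linarith
        · have h0 : (Real.sin m₀ - Real.sin M)*Real.cos D' ≤ (s/2)*1 :=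
            mul_le_mul (by linarith) (Real.cos_le_one _) hcosD'0 (by linarith)
          linarith
      have e2 : 2*Real.sin M*(Real.cos (D-r) - Real.cos D') =
          (Real.sin a - Real.sin (a-s)) + 2*(Real.sin m₀ - Real.sin M)*Real.cos D' := by
        have e3 : 2*Real.sin m₀*Real.cos D' = Real.sin b + Real.sin c := idBC.symm
        have e4 : 2*Real.sin M*(Real.cos (D-r) - Real.cos D') =
            2*Real.sin M*Real.cos (D-r) - 2*Real.sin M*Real.cos D' := by ring
        rw [e4, e1]
        linarith [e3]
      linarith [e2, hsina_up, p2]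
    -- lower bound on cos(D-r) - cos D'
    have identA : Real.cos (D-r) - Real.cos D' =
        2 * Real.sin ((D-r+D')/2) * Real.sin ((2*r+s)/4) := by
      have h0 := Real.cos_sub_cos (D-r) D'
      have h1 : (D-r-D')/2 = -((2*r+s)/4) := by rw [hD, hD']; ring
      rw [h1, Real.sin_neg] at h0
      linarith [h0]
    have hDD' : D + s/2 = D' := by rw [hD, hD']; ring
    have f1 : σ ≤ Real.sin ((D-r+D')/2) := by
      rw [hσ]
      apply Real.sin_le_sin_of_le_of_le_pi_div_two (by linarith [hD'_mem.1]) _ _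
      · linarith [hD'_mem.2, hr_le]
      · linarith [hr_le, hD'_mem.1, hD_pos]
    have harg_mem : 0 ≤ (2*r+s)/4 ∧ (2*r+s)/4 ≤ π/2 := by
      constructor
      · linarith
      · linarith [hr_le, hD_lt, hs8]
    have f2 : 2/π*((2*r+s)/4) ≤ Real.sin ((2*r+s)/4) :=
      Real.mul_le_sin harg_mem.1 harg_mem.2
    have f2nn : 0 ≤ 2/π*((2*r+s)/4) := by positivity
    have hcd_low : 2*σ*(2/π*((2*r+s)/4)) ≤ Real.cos (D-r) - Real.cos D' := by
      rw [identA]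
      have h0 : σ*(2/π*((2*r+s)/4)) ≤ Real.sin ((D-r+D')/2) * Real.sin ((2*r+s)/4) :=
        mul_le_mul f1 f2 f2nn (by linarith [f1, hσ_pos])
      linarith [h0]
    have hcd_nn : 0 ≤ Real.cos (D-r) - Real.cos D' := le_trans (by positivity) hcd_low
    have hprod : (Real.sin m₀/2) * (2*σ*(2/π*((2*r+s)/4))) ≤
        Real.sin M * (Real.cos (D-r) - Real.cos D') :=
      mul_le_mul hsinM_half hcd_low (by positivity) hsinM_pos.le
    have e5 : (Real.sin m₀/2) * (2*σ*(2/π*((2*r+s)/4))) =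
        (Real.sin m₀*σ*(2*r+s))/(2*π) := by ring
    have g3 : (Real.sin m₀*σ*(2*r+s))/(2*π) ≤ s := by
      rw [← e5]
      linarith [hprod, g1]
    have g4 : Real.sin m₀*σ*(2*r+s) ≤ s*(2*π) :=
      (div_le_iff₀ (by positivity)).1 g3
    have hnn : 0 ≤ Real.sin m₀*σ*s := by positivity
    have g5 : r*(σ*Real.sin m₀) ≤ π*s := by linarith [g4, hnn]
    rw [hK, show π/(σ*Real.sin m₀)*s = π*s/(σ*Real.sin m₀) by ring,
      le_div_iff₀ (by positivity)]
    linarith [g5]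
  -- memberships and construction
  refine ⟨a - s, b + s + r, c - r, ⟨by linarith, by linarith⟩,
    ⟨by linarith, by linarith [hbsr_le, hM_mem.2]⟩,
    ⟨by linarith [hcr_ge, hM_mem.1], by linarith⟩, by ring, by linarith [hconstraint], ?_⟩
  -- objective
  obtain ⟨d1l, d1u⟩ := sin_slope (x := (a-s)/2) (y := a/2) (by linarith) (by linarith)
    (by linarith)
  rw [show a/2 - (a-s)/2 = s/2 by ring] at d1l d1u
  obtain ⟨d2l, d2u⟩ := sin_slope (x := b/2) (y := (b+s+r)/2) (by linarith) (by linarith)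
    (by linarith [hbsr_le, hM_mem.2])
  rw [show (b+s+r)/2 - b/2 = (s+r)/2 by ring] at d2l d2u
  obtain ⟨d3l, d3u⟩ := sin_slope (x := (c-r)/2) (y := c/2) (by linarith [hcr_ge, hM_mem.1])
    (by linarith) (by linarith)
  rw [show c/2 - (c-r)/2 = r/2 by ring] at d3l d3u
  have lip1 : Real.cos ((a-s)/2) ≤ α + s/2 := by
    have h1 : |(a-s)/2 - a/2| = s/2 := by
      rw [show (a-s)/2 - a/2 = -(s/2) by ring, abs_neg]
      exact abs_of_pos (by linarith)
    have h0 := cos_lip ((a-s)/2) (a/2)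
    rw [← hα, h1] at h0
    linarith [(abs_le.1 h0).2]
  have lip2 : β - (s+r)/2 ≤ Real.cos ((b+s+r)/2) := by
    have h1 : |(b+s+r)/2 - b/2| = (s+r)/2 := by
      rw [show (b+s+r)/2 - b/2 = (s+r)/2 by ring]
      exact abs_of_pos (by linarith)
    have h0 := cos_lip ((b+s+r)/2) (b/2)
    rw [← hβ, h1] at h0
    linarith [(abs_le.1 h0).1]
  have lip3 : Real.cos ((c-r)/2) ≤ γ + r/2 := by
    have h1 : |(c-r)/2 - c/2| = r/2 := by
      rw [show (c-r)/2 - c/2 = -(r/2) by ring, abs_neg]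
      exact abs_of_pos (by linarith)
    have h0 := cos_lip ((c-r)/2) (c/2)
    rw [← hγ, h1] at h0
    linarith [(abs_le.1 h0).2]
  have hd1 : Real.sin ((a-s)/2) - Real.sin (a/2) ≥ -(s/2)*(α + s/2) := by
    have h0 : (s/2)*Real.cos ((a-s)/2) ≤ (s/2)*(α + s/2) :=
      mul_le_mul_of_nonneg_left lip1 (by linarith)
    linarith [d1u, h0]
  have hd2 : Real.sin ((b+s+r)/2) - Real.sin (b/2) ≥ ((s+r)/2)*(β - (s+r)/2) := by
    have h0 : ((s+r)/2)*(β - (s+r)/2) ≤ ((s+r)/2)*Real.cos ((b+s+r)/2) :=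
      mul_le_mul_of_nonneg_left lip2 (by linarith)
    linarith [d2l, h0]
  have hd3 : Real.sin ((c-r)/2) - Real.sin (c/2) ≥ -(r/2)*(γ + r/2) := by
    have h0 : (r/2)*Real.cos ((c-r)/2) ≤ (r/2)*(γ + r/2) :=
      mul_le_mul_of_nonneg_left lip3 (by linarith)
    linarith [d3u, h0]
  have hlowα : s*(α^2-β^2) ≤ r*(β^2-γ^2) := by
    have h0 : Real.cos a - Real.cos b = 2*(α^2-β^2) := by rw [hcosa, hcosb]; ring
    have h1 : Real.cos b - Real.cos c = 2*(β^2-γ^2) := by rw [hcosb, hcosc]; ring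
    rw [h0, h1] at hr_low
    linarith
  have hfinal := algA_final hγ0 hγβ hβα hα1 hs0 hr_pos.le hK_pos.le hr_up hlowα hQ hs7
  linarith [hd1, hd2, hd3, hfinal]

theorem three_angle_maximizer (S T a b c : ℝ)
    (hT : 0 < T)
    (ha : a ∈ Set.Icc 0 π) (hb : b ∈ Set.Icc 0 π) (hc : c ∈ Set.Icc 0 π)
    (hab : a ≤ b) (hbc : b ≤ c)
    (hsum : a + b + c = S)
    (hsin : Real.sin a + Real.sin b + Real.sin c = T)
    (hmax : ∀ a' b' c' : ℝ, a' ∈ Set.Icc 0 π → b' ∈ Set.Icc 0 π → c' ∈ Set.Icc 0 π →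
      a' + b' + c' = S → Real.sin a' + Real.sin b' + Real.sin c' = T →
      Real.sin (a' / 2) + Real.sin (b' / 2) + Real.sin (c' / 2) ≤
        Real.sin (a / 2) + Real.sin (b / 2) + Real.sin (c / 2)) :
    a = 0 ∨ b = c := by
  by_contra hcon
  push_neg at hcon
  obtain ⟨hane, hbne⟩ := hcon
  have ha_pos : 0 < a := lt_of_le_of_ne ha.1 (Ne.symm hane)
  have hbc' : b < c := lt_of_le_of_ne hbc hbne
  rcases eq_or_lt_of_le hab with heq | hlt
  · subst heq
    obtain ⟨a', b', c', h1, h2, h3, h4, h5, h6⟩ := improveB ha_pos hbc' hc.2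
    have hm := hmax a' b' c' h1 h2 h3 (by rw [h4]; exact hsum) (by rw [h5]; exact hsin)
    linarith [hm, h6]
  · obtain ⟨a', b', c', h1, h2, h3, h4, h5, h6⟩ := improveA ha_pos hlt hbc' hc.2
    have hm := hmax a' b' c' h1 h2 h3 (by rw [h4]; exact hsum) (by rw [h5]; exact hsin)
    linarith [hm, h6]
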